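/- If f is a minterm-transitive Boolean function on n variables, then s(f) = Ω(n^{1/3}); concretely, if f = p^G for a transitive group G and a pattern p of support size k ≥ 1, then s(f) ≥ max(k/2, c·n/k²) for an absolute constant c > 0, and hence s(f) ≥ c'·n^{1/3}. -/

import Mathlib

/-- Flip the `i`-th bit of `x`. -/
def flipBit {n : ℕ} (x : Fin n → Bool) (i : Fin n) : Fin n → Bool :=
  fun j => if j = i then !x j else x j

/-- Flip all bits of `x` in the block `B`. -/
def flipSet {n : ℕ} (x : Fin n → Bool) (B : Finset (Fin n)) : Fin n → Bool :=
  fun j => if j ∈ B then !x j else x j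

/-- Sensitivity of `f` at the input `x`. -/
def sensAt {n : ℕ} (f : (Fin n → Bool) → Bool) (x : Fin n → Bool) : ℕ :=
  (Finset.univ.filter fun i => f (flipBit x i) ≠ f x).card

/-- Sensitivity of `f`. -/
def sens {n : ℕ} (f : (Fin n → Bool) → Bool) : ℕ :=
  Finset.univ.sup fun x => sensAt f x

/-- 0-sensitivity of `f`: max sensitivity over inputs where `f` is 0. -/
def sens0 {n : ℕ} (f : (Fin n → Bool) → Bool) : ℕ :=
  (Finset.univ.filter fun x => f x = false).sup fun x => sensAt f x

/-- 1-sensitivity of `f`: max sensitivity over inputs where `f` is 1. -/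
def sens1 {n : ℕ} (f : (Fin n → Bool) → Bool) : ℕ :=
  (Finset.univ.filter fun x => f x = true).sup fun x => sensAt f x

/-- Block sensitivity of `f` at `x`: the largest number of pairwise disjoint
nonempty blocks each of whose flips changes the value of `f` at `x`. -/
noncomputable def bsensAt {n : ℕ} (f : (Fin n → Bool) → Bool) (x : Fin n → Bool) : ℕ :=
  sSup {r : ℕ | ∃ B : Fin r → Finset (Fin n),
    (∀ j, (B j).Nonempty ∧ f (flipSet x (B j)) ≠ f x) ∧
    ∀ j j', j ≠ j' → Disjoint (B j) (B j')}

/-- Block sensitivity of `f`. -/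
noncomputable def bsens {n : ℕ} (f : (Fin n → Bool) → Bool) : ℕ :=
  Finset.univ.sup fun x => bsensAt f x

/-- A permutation group on `[n]` is transitive. -/
def IsTransitive {n : ℕ} (G : Subgroup (Equiv.Perm (Fin n))) : Prop :=
  ∀ i j : Fin n, ∃ π ∈ G, π i = j

open Classical in
/-- The minterm-transitive function `p^G` defined by the partial assignment
`p` with support `S`: it is 1 on `x` iff `x` extends some `G`-shift of `p`. -/
noncomputable def mintermFn {n : ℕ} (G : Subgroup (Equiv.Perm (Fin n)))
    (S : Finset (Fin n)) (p : Fin n → Bool) : (Fin n → Bool) → Bool :=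
  fun x => decide (∃ π ∈ G, ∀ i ∈ S, x (π i) = p i)

set_option maxHeartbeats 1000000
lemma minterm_true_iff {n : ℕ} (G : Subgroup (Equiv.Perm (Fin n)))
    (S : Finset (Fin n)) (p : Fin n → Bool) (x : Fin n → Bool) :
    mintermFn G S p x = true ↔ ∃ π ∈ G, ∀ i ∈ S, x (π i) = p i := by
  simp [mintermFn]

lemma sensAt_le_sens {n : ℕ} (f : (Fin n → Bool) → Bool) (x : Fin n → Bool) :
    sensAt f x ≤ sens f := Finset.le_sup (Finset.mem_univ x)

lemma k_le_two_sens {n : ℕ} (G : Subgroup (Equiv.Perm (Fin n)))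
    (S : Finset (Fin n)) (p : Fin n → Bool) (hS : S.Nonempty) :
    S.card ≤ 2 * sens (mintermFn G S p) := by
  classical
  set f := mintermFn G S p with hf
  set k1 := (S.filter (fun i => p i = true)).card with hk1
  set v : Bool := if S.card ≤ 2 * k1 then true else false with hv
  set Sv := S.filter (fun i => p i = v) with hSv
  have hsplit : k1 + (S.filter (fun i => ¬ p i = true)).card = S.card :=
    Finset.card_filter_add_card_filter_not (fun i => p i = true)
  have hkM : S.card ≤ 2 * Sv.card := by
    by_cases h : S.card ≤ 2 * k1
    · have : Sv = S.filter (fun i => p i = true) := by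
        rw [hSv, hv, if_pos h]
      rw [this]; omega
    · have hvf : v = false := by rw [hv, if_neg h]
      have : Sv = S.filter (fun i => ¬ p i = true) := by
        rw [hSv, hvf]
        apply Finset.filter_congr
        intro i _
        cases hpi : p i <;> simp [hpi]
      rw [this]; omega
  set y : Fin n → Bool := fun j => if j ∈ S then p j else !v with hy
  have hyt : f y = true := by
    rw [hf, minterm_true_iff]
    exact ⟨1, G.one_mem, fun i hi => by simp [hy, hi]⟩
  have hVy : ∀ b ∈ Sv, (Finset.univ.filter fun j => flipBit y b j = v) = Sv.erase b := by
    intro b hb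
    obtain ⟨hbS, hbv⟩ := Finset.mem_filter.mp hb
    ext j
    simp only [Finset.mem_filter, Finset.mem_univ, true_and, Finset.mem_erase, flipBit]
    by_cases hj : j = b
    · subst hj
      simp [hy, hbS, hbv]
    · simp only [if_neg hj, hy, hSv, Finset.mem_filter]
      by_cases hjS : j ∈ S <;> simp [hjS, hj]
  have hsens : ∀ b ∈ Sv, f (flipBit y b) = false := by
    intro b hb
    rw [hf, mintermFn]
    simp only [decide_eq_false_iff_not]
    rintro ⟨π, hπ, hmatch⟩
    have himg : Sv.image π ⊆ Finset.univ.filter fun j => flipBit y b j = v := by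
      intro u hu
      obtain ⟨i, hi, rfl⟩ := Finset.mem_image.mp hu
      obtain ⟨hiS, hiv⟩ := Finset.mem_filter.mp hi
      simp only [Finset.mem_filter, Finset.mem_univ, true_and]
      rw [hmatch i hiS, hiv]
    have hcard := Finset.card_le_card himg
    rw [Finset.card_image_of_injective _ π.injective, hVy b hb,
      Finset.card_erase_of_mem hb] at hcard
    have hpos : 0 < Sv.card := Finset.card_pos.mpr ⟨b, hb⟩
    omega
  have hsub : Sv ⊆ Finset.univ.filter fun i => f (flipBit y i) ≠ f y := by
    intro b hb
    simp only [Finset.mem_filter, Finset.mem_univ, true_and, hsens b hb, hyt]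
    simp
  have : Sv.card ≤ sensAt f y := Finset.card_le_card hsub
  have := sensAt_le_sens f y
  omega
lemma exists_disjoint_translates {n : ℕ} (G : Subgroup (Equiv.Perm (Fin n)))
    (hG : IsTransitive G) (S : Finset (Fin n)) (hS : S.Nonempty) :
    ∃ F : Finset (Finset (Fin n)),
      (∀ T ∈ F, ∃ π, π ∈ G ∧ T = S.image ⇑π) ∧
      (∀ T ∈ F, ∀ T' ∈ F, T ≠ T' → Disjoint T T') ∧
      n ≤ S.card * S.card * F.card := by
  classical
  set valid : Finset (Finset (Fin n)) → Prop := fun F =>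
    (∀ T ∈ F, ∃ π, π ∈ G ∧ T = S.image ⇑π) ∧
    (∀ T ∈ F, ∀ T' ∈ F, T ≠ T' → Disjoint T T') with hvalid
  have hne : (Finset.univ.filter valid).Nonempty :=
    ⟨∅, by simp [hvalid]⟩
  obtain ⟨F, hFmem, hFmax⟩ :=
    Finset.exists_max_image (Finset.univ.filter valid) Finset.card hne
  obtain ⟨hF1, hF2⟩ := (Finset.mem_filter.mp hFmem).2
  refine ⟨F, hF1, hF2, ?_⟩
  set U := F.biUnion id with hU
  have hmeet : ∀ π : Equiv.Perm (Fin n), π ∈ G → ∃ i ∈ S, π i ∈ U := by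
    intro π hπ
    by_contra hcon
    push_neg at hcon
    have hdisj : Disjoint (S.image ⇑π) U := by
      rw [Finset.disjoint_left]
      rintro a ha
      obtain ⟨i, hi, rfl⟩ := Finset.mem_image.mp ha
      exact hcon i hi
    have hnotmem : S.image ⇑π ∉ F := by
      intro hmem
      obtain ⟨i0, hi0⟩ := hS
      exact hcon i0 hi0
        (Finset.mem_biUnion.mpr ⟨_, hmem, Finset.mem_image_of_mem _ hi0⟩)
    have hvalid' : valid (insert (S.image ⇑π) F) := by
      constructor
      · intro T hT
        rcases Finset.mem_insert.mp hT with h | h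
        · exact ⟨π, hπ, h⟩
        · exact hF1 T h
      · intro T hT T' hT' hne'
        rcases Finset.mem_insert.mp hT with h | h <;>
          rcases Finset.mem_insert.mp hT' with h' | h'
        · exact absurd (h.trans h'.symm) hne'
        · subst h; exact hdisj.mono_right (Finset.subset_biUnion_of_mem id h')
        · subst h'; exact (hdisj.mono_right (Finset.subset_biUnion_of_mem id h)).symm
        · exact hF2 T h T' h' hne'
    have hlt := hFmax _ (Finset.mem_filter.mpr ⟨Finset.mem_univ _, hvalid'⟩)
    rw [Finset.card_insert_of_notMem hnotmem] at hlt
    omega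
  set Gf := Finset.univ.filter (fun π : Equiv.Perm (Fin n) => π ∈ G) with hGf
  have hg0 : 0 < Gf.card := Finset.card_pos.mpr ⟨1, by simp [hGf, G.one_mem]⟩
  have hfib_eq : ∀ (i u w : Fin n),
      (Gf.filter fun π => π i = u).card = (Gf.filter fun π => π i = w).card := by
    intro i u w
    obtain ⟨τ, hτ, hτuw⟩ := hG u w
    apply Finset.card_bij' (fun π _ => τ * π) (fun π _ => τ⁻¹ * π)
    · intro π hπ
      simp only [Finset.mem_filter, Finset.mem_univ, true_and, hGf] at hπ ⊢
      exact ⟨G.mul_mem hτ hπ.1, by rw [Equiv.Perm.mul_apply, hπ.2, hτuw]⟩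
    · intro π hπ
      simp only [Finset.mem_filter, Finset.mem_univ, true_and, hGf] at hπ ⊢
      refine ⟨G.mul_mem (G.inv_mem hτ) hπ.1, ?_⟩
      rw [Equiv.Perm.mul_apply, hπ.2, ← hτuw, Equiv.Perm.coe_inv, Equiv.symm_apply_apply]
    · intro π _; simp [mul_assoc]
    · intro π _; simp [← mul_assoc]
  have hfib : ∀ i u : Fin n, n * (Gf.filter fun π => π i = u).card = Gf.card := by
    intro i u
    have hsum : Gf.card = ∑ w : Fin n, (Gf.filter fun π => π i = w).card :=
      Finset.card_eq_sum_card_fiberwise (fun x _ => Finset.mem_univ _)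
    rw [hsum]
    rw [Finset.sum_congr rfl (fun w _ => (hfib_eq i u w).symm), Finset.sum_const,
      Finset.card_univ, Fintype.card_fin, smul_eq_mul]
  have hUcard : U.card = F.card * S.card := by
    have hb := Finset.card_biUnion (s := F) (t := id) (fun T hT T' hT' h => hF2 T hT T' hT' h)
    rw [hU, hb, Finset.sum_congr rfl (fun T hT => ?_), Finset.sum_const, smul_eq_mul]
    obtain ⟨π, _, rfl⟩ := hF1 T hT
    simp [Finset.card_image_of_injective _ π.injective]
  have hone : ∀ π ∈ Gf, 1 ≤ ∑ i ∈ S, if π i ∈ U then 1 else 0 := by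
    intro π hπ
    obtain ⟨i, hi, hiU⟩ := hmeet π ((Finset.mem_filter.mp hπ).2)
    calc (1 : ℕ) = if π i ∈ U then 1 else 0 := by rw [if_pos hiU]
    _ ≤ ∑ i ∈ S, if π i ∈ U then 1 else 0 :=
        Finset.single_le_sum (f := fun i => if π i ∈ U then 1 else 0)
          (fun _ _ => Nat.zero_le _) hi
  have hstep1 : Gf.card ≤ ∑ π ∈ Gf, ∑ i ∈ S, if π i ∈ U then 1 else 0 := by
    calc Gf.card = ∑ _π ∈ Gf, 1 := by rw [Finset.sum_const, smul_eq_mul, mul_one]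
    _ ≤ _ := Finset.sum_le_sum hone
  have hinner : ∀ i : Fin n, n * (∑ π ∈ Gf, if π i ∈ U then 1 else 0) = U.card * Gf.card := by
    intro i
    have h1 : (∑ π ∈ Gf, if π i ∈ U then 1 else 0) = (Gf.filter fun π => π i ∈ U).card := by
      rw [Finset.card_filter]
    have h2 : (Gf.filter fun π => π i ∈ U).card
        = ∑ u ∈ U, ((Gf.filter fun π => π i ∈ U).filter fun π => π i = u).card :=
      Finset.card_eq_sum_card_fiberwise (fun π hπ => (Finset.mem_filter.mp hπ).2)
    have h3 : ∀ u ∈ U, ((Gf.filter fun π => π i ∈ U).filter fun π => π i = u)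
        = Gf.filter fun π => π i = u := by
      intro u hu
      rw [Finset.filter_filter]
      apply Finset.filter_congr
      intro π _
      constructor
      · exact fun h => h.2
      · exact fun h => ⟨h ▸ hu, h⟩
    rw [h1, h2, Finset.sum_congr rfl (fun u hu => by rw [h3 u hu]), Finset.mul_sum,
      Finset.sum_congr rfl (fun u _ => hfib i u), Finset.sum_const, smul_eq_mul]
  have hfinal : n * Gf.card ≤ (S.card * S.card * F.card) * Gf.card := by
    calc n * Gf.card ≤ n * ∑ π ∈ Gf, ∑ i ∈ S, if π i ∈ U then 1 else 0 :=
          Nat.mul_le_mul_left n hstep1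
    _ = n * ∑ i ∈ S, ∑ π ∈ Gf, if π i ∈ U then 1 else 0 := by rw [Finset.sum_comm]
    _ = ∑ i ∈ S, n * ∑ π ∈ Gf, if π i ∈ U then 1 else 0 := by rw [Finset.mul_sum]
    _ = ∑ _i ∈ S, U.card * Gf.card := Finset.sum_congr rfl (fun i _ => hinner i)
    _ = S.card * (U.card * Gf.card) := by rw [Finset.sum_const, smul_eq_mul]
    _ = (S.card * S.card * F.card) * Gf.card := by rw [hUcard]; ring
  exact Nat.le_of_mul_le_mul_right hfinal hg0
lemma family_le_sens {n : ℕ} (G : Subgroup (Equiv.Perm (Fin n)))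
    (S : Finset (Fin n)) (p : Fin n → Bool) (hS : S.Nonempty)
    (F : Finset (Finset (Fin n)))
    (hF1 : ∀ T ∈ F, ∃ π, π ∈ G ∧ T = S.image ⇑π)
    (hF2 : ∀ T ∈ F, ∀ T' ∈ F, T ≠ T' → Disjoint T T') :
    F.card ≤ sens (mintermFn G S p) := by
  classical
  set f := mintermFn G S p with hf
  obtain ⟨i0, hi0⟩ := hS
  set v := p i0 with hv
  set Pm : {T // T ∈ F} → Equiv.Perm (Fin n) := fun T => (hF1 T.1 T.2).choose with hPmdef
  have hPm : ∀ T : {T // T ∈ F}, Pm T ∈ G ∧ T.1 = S.image ⇑(Pm T) :=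
    fun T => (hF1 T.1 T.2).choose_spec
  set Sv := (S.filter fun i => p i = v).erase i0 with hSvdef
  have hSvS : Sv ⊆ S := (Finset.erase_subset _ _).trans (Finset.filter_subset _ _)
  set Bp : {T // T ∈ F} → Finset (Fin n) := fun T => Sv.image ⇑(Pm T) with hBp
  set a : {T // T ∈ F} → Fin n := fun T => Pm T i0 with ha
  set Om := F.attach.biUnion Bp with hOm
  have hdisj : ∀ T T' : {T // T ∈ F}, T ≠ T' → Disjoint T.1 T'.1 := by
    intro T T' hne
    exact hF2 T.1 T.2 T'.1 T'.2 (fun h => hne (Subtype.ext h))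
  have hBpT : ∀ T : {T // T ∈ F}, Bp T ⊆ T.1 := by
    intro T
    rw [hBp, (hPm T).2]
    exact Finset.image_subset_image hSvS
  have haT : ∀ T : {T // T ∈ F}, a T ∈ T.1 := by
    intro T
    rw [(hPm T).2]
    exact Finset.mem_image_of_mem _ hi0
  have hnotOm : ∀ (T : {T // T ∈ F}) (x : Fin n), x ∈ T.1 →
      (∀ j ∈ Sv, x ≠ Pm T j) → x ∉ Om := by
    intro T x hxT hxne hxOm
    obtain ⟨T', _, hxB⟩ := Finset.mem_biUnion.mp hxOm
    by_cases hTT : T' = T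
    · subst hTT
      obtain ⟨j, hj, rfl⟩ := Finset.mem_image.mp hxB
      exact hxne j hj rfl
    · exact Finset.disjoint_left.mp (hdisj T' T hTT) (hBpT T' hxB) hxT
  have haOm : ∀ T : {T // T ∈ F}, a T ∉ Om := by
    intro T
    refine hnotOm T _ (haT T) ?_
    intro j hj heq
    exact (Finset.mem_erase.mp hj).1 ((Pm T).injective heq).symm
  have hiOm : ∀ (T : {T // T ∈ F}) (i : Fin n), i ∈ S → ¬ p i = v → Pm T i ∉ Om := by
    intro T i hiS hpiv
    refine hnotOm T _ ((hPm T).2 ▸ Finset.mem_image_of_mem _ hiS) ?_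
    intro j hj heq
    have := (Pm T).injective heq
    subst this
    exact hpiv (Finset.mem_filter.mp (Finset.mem_of_mem_erase hj)).2
  set zf : Finset (Fin n) → (Fin n → Bool) := fun W j => if j ∈ W then v else !v with hzf
  have hempty : f (zf ∅) = false := by
    rw [hf, mintermFn]
    simp only [decide_eq_false_iff_not]
    rintro ⟨π, _, hmatch⟩
    have := hmatch i0 hi0
    simp [hzf, hv] at this
  set P : Finset (Fin n) → Prop := fun W => W ⊆ Om ∧ f (zf W) = false with hP
  have hPne : (Finset.univ.filter P).Nonempty :=
    ⟨∅, Finset.mem_filter.mpr ⟨Finset.mem_univ _, Finset.empty_subset _, hempty⟩⟩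
  obtain ⟨W, hWmem, hWmax⟩ :=
    Finset.exists_max_image (Finset.univ.filter P) Finset.card hPne
  obtain ⟨hWOm, hWf⟩ := (Finset.mem_filter.mp hWmem).2
  have hflip : ∀ b ∉ W, flipBit (zf W) b = zf (insert b W) := by
    intro b hb
    funext j
    by_cases hj : j = b
    · subst hj
      simp [flipBit, hzf, hb]
    · simp [flipBit, hj, hzf, Finset.mem_insert]
  have hD : ∀ b ∈ Om \ W, f (flipBit (zf W) b) = true := by
    intro b hb
    obtain ⟨hbOm, hbW⟩ := Finset.mem_sdiff.mp hb
    rw [hflip b hbW]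
    by_contra hcon
    have hfalse : f (zf (insert b W)) = false := by
      revert hcon; cases f (zf (insert b W)) <;> simp
    have hmem : insert b W ∈ Finset.univ.filter P :=
      Finset.mem_filter.mpr ⟨Finset.mem_univ _, Finset.insert_subset hbOm hWOm, hfalse⟩
    have := hWmax _ hmem
    rw [Finset.card_insert_of_notMem hbW] at this
    omega
  have haW : ∀ T : {T // T ∈ F}, a T ∉ W := fun T hmem => haOm T (hWOm hmem)
  have hC : ∀ T : {T // T ∈ F}, Bp T ⊆ W → f (flipBit (zf W) (a T)) = true := by
    intro T hTW
    rw [hf, minterm_true_iff]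
    refine ⟨Pm T, (hPm T).1, ?_⟩
    intro i hiS
    by_cases hii : i = i0
    · subst hii
      have : Pm T i = a T := rfl
      rw [this]
      simp [flipBit, hzf, haW T, ← hv]
    · have hne : Pm T i ≠ a T := fun h => hii ((Pm T).injective h)
      have hval : flipBit (zf W) (a T) (Pm T i) = zf W (Pm T i) := by
        simp [flipBit, hne]
      rw [hval]
      by_cases hpv : p i = v
      · have hmem : Pm T i ∈ Bp T :=
          Finset.mem_image_of_mem _ (Finset.mem_erase.mpr ⟨hii, Finset.mem_filter.mpr ⟨hiS, hpv⟩⟩)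
        have : Pm T i ∈ W := hTW hmem
        simp [hzf, this, hpv]
      · have hnotW : Pm T i ∉ W := fun h => hiOm T i hiS hpv (hWOm h)
        have hpnot : p i = !v := by
          cases hpi : p i <;> cases hvv : v <;> simp [hpi, hvv] at hpv ⊢
        simp [hzf, hnotW, hpnot]
  -- counting
  set SB := Finset.univ.filter (fun b => f (flipBit (zf W) b) ≠ f (zf W)) with hSB
  set D := Om \ W with hDdef
  set C := F.attach.filter (fun T => Bp T ⊆ W) with hCdef
  set A := C.image a with hAdef
  have hDSB : D ⊆ SB := by
    intro b hb
    simp only [hSB, Finset.mem_filter, Finset.mem_univ, true_and, hD b hb, hWf]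
    simp
  have hASB : A ⊆ SB := by
    intro x hx
    obtain ⟨T, hT, rfl⟩ := Finset.mem_image.mp hx
    have := hC T (Finset.mem_filter.mp hT).2
    simp only [hSB, Finset.mem_filter, Finset.mem_univ, true_and, this, hWf]
    simp
  have hAD : Disjoint A D := by
    rw [Finset.disjoint_left]
    intro x hx hxD
    obtain ⟨T, _, rfl⟩ := Finset.mem_image.mp hx
    exact haOm T (Finset.mem_sdiff.mp hxD).1
  have hAcard : A.card = C.card := by
    rw [hAdef]
    apply Finset.card_image_of_injOn
    intro T _ T' _ heq
    by_contra hne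
    exact Finset.disjoint_left.mp (hdisj T T' hne) (haT T) (heq ▸ haT T')
  have hinc : (F.attach.filter (fun T => ¬ Bp T ⊆ W)).card ≤ D.card := by
    set g : {T // T ∈ F} → Fin n := fun T =>
      if h : ∃ b ∈ Bp T, b ∉ W then h.choose else a T with hg
    apply Finset.card_le_card_of_injOn g
    · intro T hT
      have hns := (Finset.mem_filter.mp hT).2
      have hex : ∃ b ∈ Bp T, b ∉ W := by
        rw [Finset.not_subset] at hns
        exact hns
      have hspec := hex.choose_spec
      rw [hg]
      simp only [dif_pos hex]
      exact Finset.mem_sdiff.mpr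
        ⟨Finset.mem_biUnion.mpr ⟨T, Finset.mem_attach _ _, hspec.1⟩, hspec.2⟩
    · intro T hT T' hT' heq
      have hnsT := (Finset.mem_filter.mp hT).2
      have hnsT' := (Finset.mem_filter.mp hT').2
      have hexT : ∃ b ∈ Bp T, b ∉ W := Finset.not_subset.mp hnsT
      have hexT' : ∃ b ∈ Bp T', b ∉ W := Finset.not_subset.mp hnsT'
      rw [hg] at heq
      simp only [dif_pos hexT, dif_pos hexT'] at heq
      by_contra hne
      exact Finset.disjoint_left.mp (hdisj T T' hne)
        (hBpT T hexT.choose_spec.1) (heq ▸ hBpT T' hexT'.choose_spec.1)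
  have hsplitF : C.card + (F.attach.filter (fun T => ¬ Bp T ⊆ W)).card = F.card := by
    rw [hCdef, Finset.card_filter_add_card_filter_not, Finset.card_attach]
  have hunion : (A ∪ D).card = A.card + D.card := Finset.card_union_of_disjoint hAD
  have hsub : A ∪ D ⊆ SB := Finset.union_subset hASB hDSB
  have hcards := Finset.card_le_card hsub
  have hsens : F.card ≤ sensAt f (zf W) := by
    have : sensAt f (zf W) = SB.card := rfl
    omega
  exact hsens.trans (sensAt_le_sens f (zf W))

/-- Minterm-transitive functions have sensitivity `Ω(n^{1/3})`: there are
absolute constants `c, c' > 0` such that for every minterm-transitive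
`f = p^G` with pattern support size `k ≥ 1`, `s(f) ≥ max(k/2, c·n/k²)`
and hence `s(f) ≥ c'·n^{1/3}`. -/
theorem sens_transitive_lower_bound :
    ∃ c : ℝ, 0 < c ∧ ∃ c' : ℝ, 0 < c' ∧
      ∀ (n k : ℕ) (G : Subgroup (Equiv.Perm (Fin n))), IsTransitive G →
        ∀ (S : Finset (Fin n)) (p : Fin n → Bool), S.card = k → 1 ≤ k →
          (((k : ℝ) / 2 ≤ (sens (mintermFn G S p) : ℝ)) ∧
            c * ((n : ℝ) / (k : ℝ) ^ 2) ≤ (sens (mintermFn G S p) : ℝ)) ∧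
          c' * (n : ℝ) ^ ((1 : ℝ) / 3) ≤ (sens (mintermFn G S p) : ℝ) := by
  refine ⟨1, one_pos, 1/2, by norm_num, ?_⟩
  intro n k G hG S p hSk hk
  set f := mintermFn G S p with hf
  have hSne : S.Nonempty := Finset.card_pos.mp (hSk ▸ hk)
  have h1 : k ≤ 2 * sens f := hSk ▸ k_le_two_sens G S p hSne
  obtain ⟨F, hF1, hF2, hFc⟩ := exists_disjoint_translates G hG S hSne
  have h2 : n ≤ k * k * sens f := by
    have hm := family_le_sens G S p hSne F hF1 hF2
    rw [hSk] at hFc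
    calc n ≤ k * k * F.card := hFc
    _ ≤ k * k * sens f := Nat.mul_le_mul_left _ hm
  have hkpos : (0:ℝ) < k := by exact_mod_cast hk
  have hs1 : (k:ℝ)/2 ≤ (sens f : ℝ) := by
    rw [div_le_iff₀ (by norm_num : (0:ℝ) < 2)]
    have : (k:ℝ) ≤ 2 * sens f := by exact_mod_cast h1
    linarith
  have hs2 : (n:ℝ)/(k:ℝ)^2 ≤ (sens f : ℝ) := by
    rw [div_le_iff₀ (by positivity : (0:ℝ) < (k:ℝ)^2)]
    have : (n:ℝ) ≤ k * k * sens f := by exact_mod_cast h2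
    nlinarith [this]
  refine ⟨⟨hs1, by rw [one_mul]; exact hs2⟩, ?_⟩
  by_cases hn : n = 0
  · subst hn
    rw [Nat.cast_zero, Real.zero_rpow (by norm_num : (1:ℝ)/3 ≠ 0), mul_zero]
    positivity
  · have hnpos : (0:ℝ) < n := by
      have : 1 ≤ n := Nat.one_le_iff_ne_zero.mpr hn
      exact_mod_cast Nat.lt_of_lt_of_le Nat.zero_lt_one this
    have hr3 : (0:ℝ) ≤ (n:ℝ)^((1:ℝ)/3) := Real.rpow_nonneg hnpos.le _
    rcases le_or_gt ((n:ℝ)^((1:ℝ)/3)) (k:ℝ) with hcase | hcase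
    · calc (1/2 : ℝ) * (n:ℝ)^((1:ℝ)/3) ≤ (1/2) * k := by linarith
      _ = (k:ℝ)/2 := by ring
      _ ≤ (sens f : ℝ) := hs1
    · have hpow2 : ((n:ℝ)^((1:ℝ)/3))^2 = (n:ℝ)^((2:ℝ)/3) := by
        rw [← Real.rpow_natCast ((n:ℝ)^((1:ℝ)/3)) 2, ← Real.rpow_mul hnpos.le]
        norm_num
      have h23 : (k:ℝ)^2 ≤ (n:ℝ)^((2:ℝ)/3) := by
        rw [← hpow2]
        nlinarith [hcase, hkpos]
      have hsplit : (n:ℝ)^((1:ℝ)/3) * (n:ℝ)^((2:ℝ)/3) = n := by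
        rw [← Real.rpow_add hnpos]
        norm_num
      have hge : (n:ℝ)^((1:ℝ)/3) ≤ (n:ℝ)/(k:ℝ)^2 := by
        rw [le_div_iff₀ (by positivity : (0:ℝ) < (k:ℝ)^2)]
        calc (n:ℝ)^((1:ℝ)/3) * (k:ℝ)^2 ≤ (n:ℝ)^((1:ℝ)/3) * (n:ℝ)^((2:ℝ)/3) := by
              apply mul_le_mul_of_nonneg_left h23 hr3
        _ = n := hsplit
      calc (1/2 : ℝ) * (n:ℝ)^((1:ℝ)/3) ≤ (n:ℝ)^((1:ℝ)/3) := by linarith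
      _ ≤ (n:ℝ)/(k:ℝ)^2 := hge
      _ ≤ (sens f : ℝ) := hs2
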